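/- For A a d×d symmetric positive definite matrix, the function f(Q) = -ln det Q - tr(Q^{-1} A) over symmetric positive-definite matrices Q attains its unique maximum at Q = A, with maximum value -ln det A - d. -/

import Mathlib

open Matrix

lemma posDef_conj' {n : Type*} [Fintype n] [DecidableEq n]
    {M B : Matrix n n ℝ} (hM : M.PosDef) (hB : IsUnit B) :
    (Bᴴ * M * B).PosDef := by
  refine PosDef.of_dotProduct_mulVec_pos (isHermitian_conjTranspose_mul_mul B hM.1) fun x hx => ?_
  have hBx : B *ᵥ x ≠ 0 := by
    intro h
    exact hx ((mulVec_injective_of_isUnit hB).eq_iff' (mulVec_zero _) |>.1 h)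
  simpa only [star_mulVec, dotProduct_mulVec, vecMul_vecMul] using hM.dotProduct_mulVec_pos hBx

open scoped MatrixOrder in
lemma key_lemma (d : ℕ) (A Q : Matrix (Fin d) (Fin d) ℝ) (hA : A.PosDef) (hQ : Q.PosDef) :
    -Real.log Q.det - (Q⁻¹ * A).trace ≤ -Real.log A.det - d ∧
    (-Real.log Q.det - (Q⁻¹ * A).trace = -Real.log A.det - d → Q = A) := by
  set R := CFC.sqrt A with hRdef
  have hRR : R * R = A := CFC.sqrt_mul_sqrt_self A hA.posSemidef.nonneg
  have hRH : R.IsHermitian := (CFC.sqrt_nonneg A).posSemidef.1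
  have hdetR : IsUnit R.det := by
    have : R.det * R.det = A.det := by rw [← det_mul, hRR]
    exact (IsUnit.mul_iff.mp (this ▸ hA.det_pos.ne'.isUnit)).1
  have hRunit : IsUnit R := (Matrix.isUnit_iff_isUnit_det R).mpr hdetR
  set S := R * Q⁻¹ * R with hSdef
  have hS : S.PosDef := by
    have := posDef_conj' hQ.inv hRunit
    rwa [hRH.eq] at this
  set μ := hS.1.eigenvalues with hμdef
  have hμpos : ∀ i, 0 < μ i := hS.eigenvalues_pos
  have htrS : S.trace = ∑ i, μ i := by
    simpa using hS.1.trace_eq_sum_eigenvalues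
  have htr : (Q⁻¹ * A).trace = ∑ i, μ i := by
    rw [← htrS, hSdef, Matrix.trace_mul_cycle, hRR, Matrix.trace_mul_comm]
  have hdetS : S.det = ∏ i, μ i := by
    have := hS.1.det_eq_prod_eigenvalues
    simpa using this
  have hdetS' : S.det = A.det / Q.det := by
    rw [hSdef, det_mul, det_mul, det_nonsing_inv, Ring.inverse_eq_inv', ← hRR, det_mul]
    field_simp [hQ.det_pos.ne']
  have hlogS : Real.log S.det = Real.log A.det - Real.log Q.det := by
    rw [hdetS', Real.log_div hA.det_pos.ne' hQ.det_pos.ne']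
  have hlogS' : Real.log S.det = ∑ i, Real.log (μ i) := by
    rw [hdetS]
    exact Real.log_prod (fun i _ => (hμpos i).ne')
  -- main rearrangement
  have hmain : -Real.log Q.det - (Q⁻¹ * A).trace
      = (∑ i, (Real.log (μ i) - μ i)) - Real.log A.det := by
    have : -Real.log Q.det = Real.log S.det - Real.log A.det := by rw [hlogS]; ring
    rw [this, htr, hlogS', Finset.sum_sub_distrib]
    ring
  have hub : ∀ i : Fin d, Real.log (μ i) - μ i ≤ -1 := fun i => by
    have := Real.log_le_sub_one_of_pos (hμpos i)
    linarith
  constructor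
  · rw [hmain]
    have : (∑ i, (Real.log (μ i) - μ i)) ≤ ∑ _i : Fin d, (-1 : ℝ) :=
      Finset.sum_le_sum (fun i _ => hub i)
    simp only [Finset.sum_const, Finset.card_univ, Fintype.card_fin, nsmul_eq_mul,
      mul_neg, mul_one] at this
    linarith
  · intro heq
    rw [hmain] at heq
    have hsum : (∑ i, (Real.log (μ i) - μ i)) = ∑ _i : Fin d, (-1 : ℝ) := by
      simp only [Finset.sum_const, Finset.card_univ, Fintype.card_fin, nsmul_eq_mul,
        mul_neg, mul_one]
      linarith
    have hall : ∀ i ∈ Finset.univ, Real.log (μ i) - μ i = -1 := by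
      intro i _
      by_contra hne
      have hlt : Real.log (μ i) - μ i < -1 := lt_of_le_of_ne (hub i) hne
      have := Finset.sum_lt_sum (fun j _ => hub j) ⟨i, Finset.mem_univ i, hlt⟩
      rw [hsum] at this
      exact lt_irrefl _ this
    have hμ1 : ∀ i, μ i = 1 := by
      intro i
      by_contra hne
      have := Real.log_lt_sub_one_of_pos (hμpos i) hne
      have h2 := hall i (Finset.mem_univ i)
      linarith
    have hSone : S = 1 := by
      nth_rewrite 1 [hS.1.spectral_theorem]
      have hdiag : (RCLike.ofReal ∘ hS.1.eigenvalues : Fin d → ℝ) = fun _ => 1 :=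
        funext fun i => by simpa using hμ1 i
      rw [hdiag, Matrix.diagonal_one]
      exact map_one _
    -- from R * Q⁻¹ * R = 1 deduce A * Q⁻¹ = 1
    have hAQ : A * Q⁻¹ = 1 := by
      have h1 : R * (R * Q⁻¹ * R) * R⁻¹ = R * R⁻¹ := by
        rw [show R * Q⁻¹ * R = (1 : Matrix (Fin d) (Fin d) ℝ) from hSone, mul_one]
      have h2 : R * R⁻¹ = 1 := Matrix.mul_nonsing_inv R hdetR
      calc A * Q⁻¹ = R * R * Q⁻¹ * (R * R⁻¹) := by rw [h2, mul_one, hRR]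
        _ = R * (R * Q⁻¹ * R) * R⁻¹ := by noncomm_ring
        _ = 1 := by rw [h1, h2]
    calc Q = A * Q⁻¹ * Q := by rw [hAQ, one_mul]
      _ = A * (Q⁻¹ * Q) := by rw [mul_assoc]
      _ = A := by rw [Matrix.nonsing_inv_mul Q hQ.det_pos.ne'.isUnit, mul_one]

/-- for `A` a `d×d` symmetric positive definite real matrix, the function
`f(Q) = -ln det Q - tr(Q⁻¹ A)` over symmetric positive-definite matrices `Q` attains
its unique maximum at `Q = A`, with maximum value `-ln det A - d`. -/
theorem matrix_log_det_trace_maximizer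
    (d : ℕ) (A : Matrix (Fin d) (Fin d) ℝ) (hA : A.PosDef) :
    (∀ Q : Matrix (Fin d) (Fin d) ℝ, Q.PosDef →
        -Real.log Q.det - (Q⁻¹ * A).trace ≤ -Real.log A.det - d) ∧
      (∀ Q : Matrix (Fin d) (Fin d) ℝ, Q.PosDef →
        -Real.log Q.det - (Q⁻¹ * A).trace = -Real.log A.det - d → Q = A) ∧
      -Real.log A.det - (A⁻¹ * A).trace = -Real.log A.det - d := by
  refine ⟨fun Q hQ => (key_lemma d A Q hA hQ).1, fun Q hQ => (key_lemma d A Q hA hQ).2, ?_⟩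
  rw [Matrix.nonsing_inv_mul A hA.det_pos.ne'.isUnit, Matrix.trace_one]
  simp
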